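/- Let k be a field, V a nonzero k-vector space, and X a subset of End_k(V). Then X is strictly triangularizable if and only if X is topologically nilpotent. -/

import Mathlib

universe u v

variable {k : Type u} [Field k]

/-- `seqProd f n = f (n-1) * ⋯ * f 1 * f 0`, the composition `Tₙ ⋯ T₂ T₁` of the first `n`
terms of the sequence `f` (and the identity for `n = 0`). -/
def seqProd {V : Type v} [AddCommGroup V] [Module k V]
    (f : ℕ → Module.End k V) : ℕ → Module.End k V
  | 0 => 1
  | n + 1 => f n * seqProd f n

/-- A subset `X ⊆ End_k(V)` is topologically nilpotent if for every sequence of elements of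
`X` and every finite-dimensional subspace `W` of `V`, some initial composition
`Tₙ ⋯ T₂ T₁` annihilates `W`. -/
def IsTopNilpotentSet {V : Type v} [AddCommGroup V] [Module k V]
    (X : Set (Module.End k V)) : Prop :=
  ∀ f : ℕ → Module.End k V, (∀ n, f n ∈ X) →
    ∀ W : Submodule k V, FiniteDimensional k ↥W →
      ∃ n : ℕ, 0 < n ∧ ∀ w ∈ W, seqProd f n w = 0

section auxlemmas
variable {V : Type v} [AddCommGroup V] [Module k V]

lemma seqProd_succ (f : ℕ → Module.End k V) (n : ℕ) :
    seqProd f (n+1) = f n * seqProd f n := rfl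

lemma seqProd_apply_succ (f : ℕ → Module.End k V) (n : ℕ) (x : V) :
    seqProd f (n+1) x = f n (seqProd f n x) := by
  rw [seqProd_succ]; rfl

lemma seqProd_zero_of_le {f : ℕ → Module.End k V} {x : V} {n m : ℕ}
    (h : seqProd f n x = 0) (hnm : n ≤ m) : seqProd f m x = 0 := by
  induction hnm with
  | refl => exact h
  | step _ ih => rename_i m' _; rw [seqProd_apply_succ, ih, map_zero]

lemma seqProd_shift (f : ℕ → Module.End k V) (m : ℕ) :
    seqProd f (m+1) = seqProd (fun n => f (n+1)) m * f 0 := by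
  induction m with
  | zero => simp [seqProd]
  | succ m ih =>
      rw [seqProd_succ, ih, seqProd_succ, ← mul_assoc]

lemma linearIndependent_of_not_mem_span_lt {ι : Type*} [LinearOrder ι]
    {v : ι → V}
    (h : ∀ i, v i ∉ Submodule.span k (v '' Set.Iio i)) : LinearIndependent k v := by
  classical
  rw [linearIndependent_iff']
  intro s g hsum i hi
  by_contra hgi
  have hne : (s.filter fun j => g j ≠ 0).Nonempty :=
    ⟨i, Finset.mem_filter.mpr ⟨hi, hgi⟩⟩
  set m := (s.filter fun j => g j ≠ 0).max' hne with hm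
  have hms : m ∈ s.filter fun j => g j ≠ 0 := Finset.max'_mem _ hne
  have hgm : g m ≠ 0 := (Finset.mem_filter.mp hms).2
  have hmem : m ∈ s := (Finset.mem_filter.mp hms).1
  apply h m
  have hsum' : g m • v m = - ∑ j ∈ s.erase m, g j • v j := by
    apply eq_neg_of_add_eq_zero_left
    rw [Finset.add_sum_erase s (fun j => g j • v j) hmem]
    exact hsum
  have hin : (∑ j ∈ s.erase m, g j • v j) ∈ Submodule.span k (v '' Set.Iio m) := by
    apply Submodule.sum_mem
    intro j hj
    by_cases hgj : g j = 0
    · simp [hgj]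
    · have hjm : j < m :=
        lt_of_le_of_ne
          (Finset.le_max' _ j (Finset.mem_filter.mpr ⟨Finset.mem_of_mem_erase hj, hgj⟩))
          (Finset.ne_of_mem_erase hj)
      exact Submodule.smul_mem _ _ (Submodule.subset_span ⟨j, hjm, rfl⟩)
  have hvm : v m = (g m)⁻¹ • (g m • v m) := by
    rw [smul_smul, inv_mul_cancel₀ hgm, one_smul]
  rw [hvm, hsum']
  exact Submodule.smul_mem _ _ (Submodule.neg_mem _ hin)

end auxlemmas

/-- An auxiliary choice function: a vector outside `U` mapped into `U` by all of `X`,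
if one exists. -/
noncomputable def nextVec {V : Type v} [AddCommGroup V] [Module k V]
    (X : Set (Module.End k V)) (U : Submodule k V) : V :=
  open Classical in
  if h : ∃ w, w ∉ U ∧ ∀ T ∈ X, T w ∈ U then h.choose else 0

/-- Transfinite sequence of vectors forming a triangularizing basis. -/
noncomputable def chainVec {V : Type v} [AddCommGroup V] [Module k V]
    (X : Set (Module.End k V)) : Ordinal.{v} → V :=
  Ordinal.lt_wf.fix fun o ih =>
    nextVec X (Submodule.span k (Set.range fun i : Set.Iio o => ih i.1 i.2))

lemma chainVec_def {V : Type v} [AddCommGroup V] [Module k V]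
    (X : Set (Module.End k V)) (o : Ordinal.{v}) :
    chainVec X o = nextVec X (Submodule.span k (chainVec X '' Set.Iio o)) := by
  rw [Set.image_eq_range]
  exact Ordinal.lt_wf.fix_eq _ o

section key
variable {V : Type v} [AddCommGroup V] [Module k V] {X : Set (Module.End k V)}

lemma exists_killed (hX : IsTopNilpotentSet X) (U : Submodule k V) (hU : U ≠ ⊤) :
    ∃ w, w ∉ U ∧ ∀ T ∈ X, T w ∈ U := by
  by_contra hc
  push_neg at hc
  obtain ⟨v₀, hv₀⟩ : ∃ w, w ∉ U := by
    by_contra h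
    push_neg at h
    exact hU (Submodule.eq_top_iff'.mpr h)
  choose! T hTX hTv using hc
  let w : ℕ → V := fun n => Nat.rec v₀ (fun _ wn => T wn wn) n
  have hws : ∀ n, w (n+1) = T (w n) (w n) := fun n => rfl
  have hw : ∀ n, w n ∉ U := by
    intro n
    induction n with
    | zero => exact hv₀
    | succ n ih => rw [hws]; exact hTv _ ih
  have hwf : ∀ n, seqProd (fun n => T (w n)) n v₀ = w n := by
    intro n
    induction n with
    | zero => rfl
    | succ n ih => rw [seqProd_apply_succ, ih, hws]
  obtain ⟨n, hn, h0⟩ := hX (fun n => T (w n)) (fun n => hTX _ (hw n))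
    (Submodule.span k {v₀}) (FiniteDimensional.span_of_finite k (Set.finite_singleton v₀))
  have := h0 v₀ (Submodule.mem_span_singleton_self v₀)
  rw [hwf] at this
  exact hw n (this ▸ U.zero_mem)

lemma chainVec_maps (o : Ordinal.{v}) :
    ∀ T ∈ X, T (chainVec X o) ∈ Submodule.span k (chainVec X '' Set.Iio o) := by
  intro T hT
  rw [chainVec_def, nextVec]
  split
  · rename_i h
    exact h.choose_spec.2 T hT
  · rw [map_zero]; exact Submodule.zero_mem _

lemma chainVec_not_mem (hX : IsTopNilpotentSet X) (o : Ordinal.{v})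
    (h : Submodule.span k (chainVec X '' Set.Iio o) ≠ ⊤) :
    chainVec X o ∉ Submodule.span k (chainVec X '' Set.Iio o) := by
  rw [chainVec_def, nextVec]
  rw [dif_pos (exists_killed hX _ h)]
  exact (exists_killed hX _ h).choose_spec.1

lemma chainVec_mem {o₁ o₂ : Ordinal.{v}} (h : o₁ < o₂) :
    chainVec X o₁ ∈ Submodule.span k (chainVec X '' Set.Iio o₂) :=
  Submodule.subset_span ⟨o₁, h, rfl⟩

lemma exists_spanLt_top (hX : IsTopNilpotentSet X) :
    ∃ o : Ordinal.{v}, Submodule.span k (chainVec X '' Set.Iio o) = ⊤ := by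
  by_contra hc
  push_neg at hc
  apply not_injective_of_ordinal (chainVec X)
  intro o₁ o₂ he
  by_contra hne
  wlog hlt : o₁ < o₂ generalizing o₁ o₂
  · exact this he.symm (Ne.symm hne) (lt_of_le_of_ne (not_lt.mp hlt) (Ne.symm hne))
  have h1 : chainVec X o₁ ∈ Submodule.span k (chainVec X '' Set.Iio o₂) := chainVec_mem hlt
  rw [he] at h1
  exact chainVec_not_mem hX o₂ (hc o₂) h1

end key

/-- `X ⊆ End_k(V)` is strictly triangularizable iff it is topologically
nilpotent. -/
theorem stmt_4 {V : Type v} [AddCommGroup V] [Module k V] [Nontrivial V]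
    (X : Set (Module.End k V)) :
    (∃ (ι : Type v) (lo : LinearOrder ι), WellFounded lo.lt ∧
      ∃ b : Module.Basis ι k V, ∀ T ∈ X, ∀ i : ι,
        T (b i) ∈ Submodule.span k (⇑b '' {j | lo.lt j i})) ↔
    IsTopNilpotentSet X := by
  constructor
  · -- strictly triangularizable → topologically nilpotent
    rintro ⟨ι, lo, hwf, b, hb⟩
    letI : LinearOrder ι := lo
    have key : ∀ i : ι, ∀ v ∈ Submodule.span k (⇑b '' Set.Iic i),
        ∀ f : ℕ → Module.End k V, (∀ n, f n ∈ X) →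
        ∃ n, 0 < n ∧ seqProd f n v = 0 := by
      intro i
      induction i using hwf.induction with
      | _ i ih =>
        intro v hv f hf
        have h2 : f 0 v ∈ Submodule.span k (⇑b '' Set.Iio i) := by
          have hmap : f 0 v ∈ Submodule.map (f 0) (Submodule.span k (⇑b '' Set.Iic i)) :=
            Submodule.mem_map_of_mem hv
          rw [Submodule.map_span] at hmap
          refine Submodule.span_le.mpr ?_ hmap
          rintro _ ⟨_, ⟨j, hj, rfl⟩, rfl⟩
          refine Submodule.span_mono (Set.image_mono ?_) (hb (f 0) (hf 0) j)
          intro j' (hj' : lo.lt j' j)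
          exact lt_of_lt_of_le hj' hj
        by_cases hz : f 0 v = 0
        · refine ⟨1, one_pos, ?_⟩
          have : seqProd f 1 v = f 0 (seqProd f 0 v) := seqProd_apply_succ f 0 v
          rw [this]
          show f 0 ((1 : Module.End k V) v) = 0
          rw [Module.End.one_apply]
          exact hz
        · have hrne : b.repr (f 0 v) ≠ 0 := fun h =>
            hz (by simpa using congrArg b.repr.symm h)
          have hsne : (b.repr (f 0 v)).support.Nonempty :=
            Finsupp.support_nonempty_iff.mpr hrne
          set i' := (b.repr (f 0 v)).support.max' hsne with hi'
          have hsupp : ↑((b.repr (f 0 v)).support) ⊆ Set.Iio i := b.mem_span_image.mp h2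
          have hi'i : lo.lt i' i := hsupp ((b.repr (f 0 v)).support.max'_mem hsne)
          have hv' : f 0 v ∈ Submodule.span k (⇑b '' Set.Iic i') :=
            b.mem_span_image.mpr (fun j hj => Finset.le_max' _ j hj)
          obtain ⟨m, hm, hm0⟩ := ih i' hi'i (f 0 v) hv' (fun n => f (n+1)) (fun n => hf (n+1))
          refine ⟨m + 1, Nat.succ_pos _, ?_⟩
          rw [seqProd_shift]
          show seqProd (fun n => f (n+1)) m (f 0 v) = 0
          exact hm0
    intro f hf W hW
    have hx : ∀ x : V, ∃ n, 0 < n ∧ seqProd f n x = 0 := by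
      intro x
      by_cases hx0 : x = 0
      · exact ⟨1, one_pos, by rw [hx0, map_zero]⟩
      · have hrne : b.repr x ≠ 0 := fun h => hx0 (by simpa using congrArg b.repr.symm h)
        have hsne : (b.repr x).support.Nonempty := Finsupp.support_nonempty_iff.mpr hrne
        have hvx : x ∈ Submodule.span k (⇑b '' Set.Iic ((b.repr x).support.max' hsne)) :=
          b.mem_span_image.mpr (fun j hj => Finset.le_max' _ j hj)
        exact key _ x hvx f hf
    classical
    choose n hn hn0 using hx
    obtain ⟨s, hs⟩ : W.FG := (Submodule.fg_iff_finiteDimensional W).mpr hW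
    refine ⟨s.sup n + 1, Nat.succ_pos _, ?_⟩
    intro w hw
    have hker : W ≤ LinearMap.ker (seqProd f (s.sup n + 1)) := by
      rw [← hs, Submodule.span_le]
      intro x hxs
      rw [SetLike.mem_coe, LinearMap.mem_ker]
      exact seqProd_zero_of_le (hn0 x)
        (le_trans (Finset.le_sup hxs) (Nat.le_succ _))
    exact LinearMap.mem_ker.mp (hker hw)
  · -- topologically nilpotent → strictly triangularizable
    intro hX
    obtain ⟨o₀, ho₀⟩ := exists_spanLt_top (V := V) hX
    have hne : {o : Ordinal.{v} | Submodule.span k (chainVec X '' Set.Iio o) = ⊤}.Nonempty :=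
      ⟨o₀, ho₀⟩
    set O := Ordinal.lt_wf.min _ hne with hO
    have hOtop : Submodule.span k (chainVec X '' Set.Iio O) = ⊤ :=
      Ordinal.lt_wf.min_mem _ hne
    have hlt : ∀ o < O, Submodule.span k (chainVec X '' Set.Iio o) ≠ ⊤ := by
      intro o ho h
      exact Ordinal.lt_wf.not_lt_min _ h ho
    let e : O.ToType → Ordinal.{v} := fun i => ((Ordinal.ToType.mk (o := O)).symm i : Ordinal.{v})
    have heO : ∀ i, e i < O := fun i => ((Ordinal.ToType.mk (o := O)).symm i).2
    have hemono : ∀ {i j : O.ToType}, i < j ↔ e i < e j := by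
      intro i j
      constructor
      · intro h
        exact Subtype.coe_lt_coe.mpr ((Ordinal.ToType.mk (o := O)).symm.lt_iff_lt.mpr h)
      · intro h
        exact (Ordinal.ToType.mk (o := O)).symm.lt_iff_lt.mp (Subtype.coe_lt_coe.mp h)
    have hesurj : ∀ o < O, ∃ i, e i = o := by
      intro o ho
      refine ⟨Ordinal.ToType.mk (o := O) ⟨o, ho⟩, ?_⟩
      show (((Ordinal.ToType.mk (o := O)).symm ((Ordinal.ToType.mk (o := O)) ⟨o, ho⟩)) : Ordinal) = o
      rw [OrderIso.symm_apply_apply]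
    let b' : O.ToType → V := fun i => chainVec X (e i)
    have himg : ∀ i : O.ToType, b' '' Set.Iio i ⊆ chainVec X '' Set.Iio (e i) := by
      rintro i _ ⟨j, hj, rfl⟩
      exact ⟨e j, hemono.mp hj, rfl⟩
    have himg2 : ∀ i : O.ToType, chainVec X '' Set.Iio (e i) ⊆ b' '' Set.Iio i := by
      rintro i _ ⟨o, ho, rfl⟩
      obtain ⟨j, rfl⟩ := hesurj o (lt_trans ho (heO i))
      exact ⟨j, hemono.mpr ho, rfl⟩
    have hind : LinearIndependent k b' := by
      apply linearIndependent_of_not_mem_span_lt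
      intro i hmem
      exact chainVec_not_mem hX (e i) (hlt _ (heO i))
        (Submodule.span_mono (himg i) hmem)
    have hspan : ⊤ ≤ Submodule.span k (Set.range b') := by
      rw [← hOtop]
      apply Submodule.span_le.mpr
      rintro _ ⟨o, ho, rfl⟩
      obtain ⟨j, rfl⟩ := hesurj o ho
      exact Submodule.subset_span ⟨j, rfl⟩
    refine ⟨O.ToType, inferInstance, IsWellFounded.wf, Module.Basis.mk hind hspan, ?_⟩
    intro T hT i
    rw [Module.Basis.coe_mk]
    have h1 : T (b' i) ∈ Submodule.span k (chainVec X '' Set.Iio (e i)) :=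
      chainVec_maps (e i) T hT
    exact Submodule.span_mono (himg2 i) h1
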